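/- Let n ≥ 1, x_{n,k} = cot(kπ/(n+1)) for k = 1,...,n. Then for every polynomial r of degree at most 2n-1, (1/π) ∫_{-∞}^{∞} r(x)/(x^2+1)^{n+1} dx = (1/(n+1)) ∑_{k=1}^{n} r(x_{n,k})/(x_{n,k}^2+1)^n. -/

import Mathlib

open MeasureTheory Real Finset intervalIntegral

lemma core_int (n d : ℕ) :
    (∫ θ in (0:ℝ)..π, Complex.exp (2*((d:ℂ)-n)*Complex.I*θ))
      = if d = n then (π:ℂ) else 0 := by
  by_cases h : d = n
  · simp [h]
  · have hc : (2*((d:ℂ)-n)*Complex.I) ≠ 0 := by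
      have hdn : ((d:ℂ)) - n ≠ 0 := sub_ne_zero.mpr (by exact_mod_cast h)
      exact mul_ne_zero (mul_ne_zero two_ne_zero hdn) Complex.I_ne_zero
    rw [if_neg h]
    rw [integral_exp_mul_complex hc]
    have h1 : (2*((d:ℂ)-n)*Complex.I) * (π:ℂ) = (((d:ℤ)-(n:ℤ) : ℤ) : ℂ) * (2*π*Complex.I) := by
      push_cast; ring
    rw [h1, Complex.exp_int_mul_two_pi_mul_I]
    simp

lemma core_sum (n d : ℕ) (hd : d ≤ 2*n) :
    (∑ k ∈ Finset.range (n+1),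
        Complex.exp (2*((d:ℂ)-n)*Complex.I*((((k:ℝ)*π/((n:ℝ)+1)):ℝ):ℂ)))
      = if d = n then ((n:ℂ)+1) else 0 := by
  have hπ : (π:ℂ) ≠ 0 := by exact_mod_cast Real.pi_ne_zero
  have hn1 : ((n:ℂ)+1) ≠ 0 := by exact_mod_cast (Nat.cast_add_one_ne_zero n (R := ℂ))
  have hI := Complex.I_ne_zero
  by_cases h : d = n
  · simp [h]
  · rw [if_neg h]
    set ζ : ℂ := Complex.exp (2*((d:ℂ)-n)*Complex.I*((π:ℂ)/((n:ℂ)+1))) with hζ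
    have hterm : ∀ k ∈ Finset.range (n+1),
        Complex.exp (2*((d:ℂ)-n)*Complex.I*((((k:ℝ)*π/((n:ℝ)+1)):ℝ):ℂ)) = ζ ^ k := by
      intro k _
      rw [hζ, ← Complex.exp_nat_mul]
      congr 1
      push_cast; ring
    rw [Finset.sum_congr rfl hterm]
    have hζ1 : ζ ≠ 1 := by
      rw [hζ, Ne, Complex.exp_eq_one_iff]
      push_neg
      intro m hmeq
      have hcd : ((d:ℂ) - n) = m * ((n:ℂ)+1) := by
        field_simp at hmeq
        have key : (2*(π:ℂ)*Complex.I) * ((d:ℂ)-n)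
            = (2*(π:ℂ)*Complex.I) * ((m:ℂ)*((n:ℂ)+1)) := by
          linear_combination (2*(π:ℂ)*Complex.I) * hmeq
        exact mul_left_cancel₀ (by simp [hπ, hI]) key
      have h2 : ((d:ℤ) - n) = m * ((n:ℤ)+1) := by exact_mod_cast hcd
      have hlt : |(d:ℤ) - n| < (n:ℤ)+1 := by
        rw [abs_sub_lt_iff]; omega
      have hne : (d:ℤ) - n ≠ 0 := by
        intro hh; apply h; omega
      rw [h2] at hlt hne
      have hm0 : m ≠ 0 := by rintro rfl; simp at hne
      have h1m : (1:ℤ) ≤ |m| := Int.one_le_abs hm0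
      rw [abs_mul] at hlt
      have habs : |((n:ℤ)+1)| = (n:ℤ)+1 := abs_of_nonneg (by positivity)
      rw [habs] at hlt
      nlinarith
    have hζn : ζ ^ (n+1) = 1 := by
      rw [hζ, ← Complex.exp_nat_mul]
      have h3 : ((n+1:ℕ):ℂ) * (2*((d:ℂ)-n)*Complex.I*((π:ℂ)/((n:ℂ)+1)))
          = (((d:ℤ)-(n:ℤ) : ℤ) : ℂ) * (2*π*Complex.I) := by
        push_cast
        field_simp
      rw [h3, Complex.exp_int_mul_two_pi_mul_I]
    rw [geom_sum_eq hζ1, hζn]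
    simp

lemma eval_exp_eq (n : ℕ) (W : Polynomial ℂ) (hW : W.natDegree < 2*n+1) (θ : ℝ) :
    W.eval (Complex.exp (2*Complex.I*θ)) * Complex.exp (-(2*(n:ℂ))*Complex.I*θ)
      = ∑ d ∈ Finset.range (2*n+1),
          W.coeff d * Complex.exp (2*((d:ℂ)-n)*Complex.I*θ) := by
  rw [Polynomial.eval_eq_sum_range' hW, Finset.sum_mul]
  refine Finset.sum_congr rfl fun d _ => ?_
  rw [mul_assoc, ← Complex.exp_nat_mul, ← Complex.exp_add]
  congr 2
  push_cast; ring

lemma core_poly_int (n : ℕ) (W : Polynomial ℂ) (hW : W.natDegree < 2*n+1) :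
    (∫ θ in (0:ℝ)..π,
        W.eval (Complex.exp (2*Complex.I*θ)) * Complex.exp (-(2*(n:ℂ))*Complex.I*θ))
      = π * W.coeff n := by
  have h1 : ∀ θ : ℝ, W.eval (Complex.exp (2*Complex.I*θ)) * Complex.exp (-(2*(n:ℂ))*Complex.I*θ)
      = ∑ d ∈ Finset.range (2*n+1), W.coeff d * Complex.exp (2*((d:ℂ)-n)*Complex.I*θ) :=
    eval_exp_eq n W hW
  simp_rw [h1]
  rw [intervalIntegral.integral_finset_sum]
  · have h2 : ∀ d ∈ Finset.range (2*n+1),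
        (∫ θ in (0:ℝ)..π, W.coeff d * Complex.exp (2*((d:ℂ)-n)*Complex.I*θ))
        = W.coeff d * (if d = n then (π:ℂ) else 0) := by
      intro d _
      rw [intervalIntegral.integral_const_mul, core_int]
    rw [Finset.sum_congr rfl h2]
    simp only [mul_ite, mul_zero]
    rw [Finset.sum_ite_eq' (Finset.range (2*n+1)) n]
    rw [if_pos (by simp; omega)]
    ring
  · intro d _
    apply Continuous.intervalIntegrable
    fun_prop

lemma core_poly_sum (n : ℕ) (W : Polynomial ℂ) (hW : W.natDegree < 2*n+1) :
    (∑ k ∈ Finset.range (n+1),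
        W.eval (Complex.exp (2*Complex.I*((((k:ℝ)*π/((n:ℝ)+1)):ℝ):ℂ)))
          * Complex.exp (-(2*(n:ℂ))*Complex.I*((((k:ℝ)*π/((n:ℝ)+1)):ℝ):ℂ)))
      = ((n:ℂ)+1) * W.coeff n := by
  have h1 := fun θ => eval_exp_eq n W hW θ
  simp_rw [h1]
  rw [Finset.sum_comm]
  have h2 : ∀ d ∈ Finset.range (2*n+1),
      (∑ k ∈ Finset.range (n+1), W.coeff d * Complex.exp (2*((d:ℂ)-n)*Complex.I*((((k:ℝ)*π/((n:ℝ)+1)):ℝ):ℂ)))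
      = W.coeff d * (if d = n then ((n:ℂ)+1) else 0) := by
    intro d hd
    rw [← Finset.mul_sum, core_sum n d (by simpa [Nat.lt_succ] using hd)]
  rw [Finset.sum_congr rfl h2]
  simp only [mul_ite, mul_zero]
  rw [Finset.sum_ite_eq' (Finset.range (2*n+1)) n]
  rw [if_pos (by simp; omega)]
  ring

lemma exp_two_add (θ : ℝ) :
    Complex.exp (2*Complex.I*θ) + 1 = 2 * Complex.exp ((θ:ℂ)*Complex.I) * Complex.cos θ := by
  have hE2 : Complex.exp (2*Complex.I*θ) = (Complex.exp ((θ:ℂ)*Complex.I))^2 := by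
    rw [sq, ← Complex.exp_add]; ring_nf
  rw [hE2, Complex.exp_mul_I]
  have h1 := Complex.sin_sq_add_cos_sq (θ:ℂ)
  linear_combination -h1 + Complex.sin (θ:ℂ)^2 * Complex.I_sq

lemma exp_two_sub (θ : ℝ) :
    Complex.exp (2*Complex.I*θ) - 1 = 2 * Complex.I * Complex.exp ((θ:ℂ)*Complex.I) * Complex.sin θ := by
  have hE2 : Complex.exp (2*Complex.I*θ) = (Complex.exp ((θ:ℂ)*Complex.I))^2 := by
    rw [sq, ← Complex.exp_add]; ring_nf
  rw [hE2, Complex.exp_mul_I]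
  have h1 := Complex.sin_sq_add_cos_sq (θ:ℂ)
  linear_combination h1 - Complex.sin (θ:ℂ)^2 * Complex.I_sq

lemma cos_sin_eq (n m b : ℕ) (hmb : m + b = 2*n) (θ : ℝ) :
    ((Real.cos θ : ℂ))^m * ((Real.sin θ : ℂ))^b
      = (Polynomial.C (((2:ℂ)^m * (2*Complex.I)^b)⁻¹) * (Polynomial.X+1)^m
          * (Polynomial.X-1)^b).eval (Complex.exp (2*Complex.I*θ))
          * Complex.exp (-(2*(n:ℂ))*Complex.I*θ) := by
  have hc : ((2:ℂ)^m * (2*Complex.I)^b) ≠ 0 :=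
    mul_ne_zero (pow_ne_zero _ two_ne_zero)
      (pow_ne_zero _ (mul_ne_zero two_ne_zero Complex.I_ne_zero))
  set E : ℂ := Complex.exp ((θ:ℂ)*Complex.I) with hEdef
  set X : ℂ := Complex.exp (-(2*(n:ℂ))*Complex.I*θ) with hXdef
  have hE : E^m * E^b * X = 1 := by
    rw [hEdef, hXdef, ← Complex.exp_nat_mul, ← Complex.exp_nat_mul, ← Complex.exp_add,
      ← Complex.exp_add]
    rw [show (m:ℂ) * ((θ:ℂ)*Complex.I) + (b:ℂ) * ((θ:ℂ)*Complex.I) + -(2*(n:ℂ))*Complex.I*θ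
        = (((m:ℂ)+(b:ℂ)) - 2*(n:ℂ)) * ((θ:ℂ)*Complex.I) by ring]
    have hz : ((m:ℂ)+(b:ℂ)) - 2*(n:ℂ) = 0 := by
      have h := congrArg (Nat.cast (R := ℂ)) hmb
      push_cast at h
      rw [h]; ring
    rw [hz, zero_mul, Complex.exp_zero]
  simp only [Polynomial.eval_mul, Polynomial.eval_pow, Polynomial.eval_add,
    Polynomial.eval_sub, Polynomial.eval_X, Polynomial.eval_one, Polynomial.eval_C]
  rw [exp_two_add θ, exp_two_sub θ, ← Complex.ofReal_cos, ← Complex.ofReal_sin]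
  have hRHS : (((2:ℂ)^m * (2*Complex.I)^b)⁻¹ * (2*E*(Real.cos θ:ℂ))^m)
        * (2*Complex.I*E*(Real.sin θ:ℂ))^b * X
      = ((Real.cos θ:ℂ))^m * ((Real.sin θ:ℂ))^b := by
    calc (((2:ℂ)^m * (2*Complex.I)^b)⁻¹ * (2*E*(Real.cos θ:ℂ))^m)
          * (2*Complex.I*E*(Real.sin θ:ℂ))^b * X
        = (((2:ℂ)^m * (2*Complex.I)^b)⁻¹ * ((2:ℂ)^m * (2*Complex.I)^b))
            * (((Real.cos θ:ℂ))^m * ((Real.sin θ:ℂ))^b) * (E^m * E^b * X) := by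
          ring
      _ = ((Real.cos θ:ℂ))^m * ((Real.sin θ:ℂ))^b := by
          rw [inv_mul_cancel₀ hc, hE]; ring
  linear_combination -hRHS

lemma trig_quad (n m : ℕ) (hmb' : m + (2*n - m) = 2*n) :
    ((n:ℝ)+1) * (∫ θ in (0:ℝ)..π, (Real.cos θ)^m * (Real.sin θ)^(2*n-m))
      = π * ∑ k ∈ Finset.range (n+1),
          (Real.cos ((k:ℝ)*π/((n:ℝ)+1)))^m * (Real.sin ((k:ℝ)*π/((n:ℝ)+1)))^(2*n-m) := by
  set b := 2*n - m with hb
  have hmb : m + b = 2*n := hmb'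
  set W : Polynomial ℂ := Polynomial.C (((2:ℂ)^m * (2*Complex.I)^b)⁻¹)
      * (Polynomial.X+1)^m * (Polynomial.X-1)^b with hW
  have hWdeg : W.natDegree < 2*n+1 := by
    have h1 : (Polynomial.X+1 : Polynomial ℂ).natDegree ≤ 1 := by
      apply le_trans (Polynomial.natDegree_add_le _ _)
      simp
    have h2 : (Polynomial.X-1 : Polynomial ℂ).natDegree ≤ 1 := by
      apply le_trans (Polynomial.natDegree_sub_le _ _)
      simp
    have h3 : ((Polynomial.X+1 : Polynomial ℂ)^m).natDegree ≤ m :=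
      le_trans (Polynomial.natDegree_pow_le) (by
        calc m * (Polynomial.X+1 : Polynomial ℂ).natDegree ≤ m * 1 := Nat.mul_le_mul_left m h1
        _ = m := mul_one m)
    have h4 : ((Polynomial.X-1 : Polynomial ℂ)^b).natDegree ≤ b :=
      le_trans (Polynomial.natDegree_pow_le) (by
        calc b * (Polynomial.X-1 : Polynomial ℂ).natDegree ≤ b * 1 := Nat.mul_le_mul_left b h2
        _ = b := mul_one b)
    have h5 : W.natDegree ≤ 0 + m + b := by
      rw [hW]
      apply le_trans (Polynomial.natDegree_mul_le)
      apply add_le_add _ h4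
      apply le_trans (Polynomial.natDegree_mul_le)
      apply add_le_add _ h3
      rw [Polynomial.natDegree_C]
    omega
  have hint := core_poly_int n W hWdeg
  have hsum := core_poly_sum n W hWdeg
  have hint' : (∫ θ in (0:ℝ)..π, ((Real.cos θ:ℂ))^m * ((Real.sin θ:ℂ))^b)
      = (π:ℂ) * W.coeff n := by
    rw [← hint]
    apply intervalIntegral.integral_congr
    intro θ _
    exact cos_sin_eq n m b hmb θ
  have hsum' : (∑ k ∈ Finset.range (n+1),
        ((Real.cos ((k:ℝ)*π/((n:ℝ)+1)):ℂ))^m * ((Real.sin ((k:ℝ)*π/((n:ℝ)+1)):ℂ))^b)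
      = ((n:ℂ)+1) * W.coeff n := by
    rw [← hsum]
    exact Finset.sum_congr rfl fun k _ => cos_sin_eq n m b hmb _
  -- coerce to real
  have hiR : (∫ θ in (0:ℝ)..π, ((Real.cos θ:ℂ))^m * ((Real.sin θ:ℂ))^b)
      = (((∫ θ in (0:ℝ)..π, (Real.cos θ)^m * (Real.sin θ)^b) : ℝ) : ℂ) := by
    rw [← intervalIntegral.integral_ofReal]
    apply intervalIntegral.integral_congr
    intro θ _
    push_cast
    ring
  have hsR : (∑ k ∈ Finset.range (n+1),
        ((Real.cos ((k:ℝ)*π/((n:ℝ)+1)):ℂ))^m * ((Real.sin ((k:ℝ)*π/((n:ℝ)+1)):ℂ))^b)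
      = (((∑ k ∈ Finset.range (n+1),
          (Real.cos ((k:ℝ)*π/((n:ℝ)+1)))^m * (Real.sin ((k:ℝ)*π/((n:ℝ)+1)))^b) : ℝ) : ℂ) := by
    push_cast
    rfl
  apply Complex.ofReal_injective
  rw [Complex.ofReal_mul, Complex.ofReal_mul, ← hiR, ← hsR, hint', hsum']
  push_cast
  ring

lemma cot_hasDerivAt {θ : ℝ} (h : Real.sin θ ≠ 0) :
    HasDerivAt Real.cot (-1/Real.sin θ^2) θ := by
  have hd := (Real.hasDerivAt_cos θ).div (Real.hasDerivAt_sin θ) h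
  have e : Real.cot = fun x => Real.cos x / Real.sin x :=
    funext fun x => Real.cot_eq_cos_div_sin x
  rw [e]
  have h2 : -Real.sin θ * Real.sin θ - Real.cos θ * Real.cos θ = -1 := by
    nlinarith [Real.sin_sq_add_cos_sq θ]
  rw [h2] at hd
  exact hd

lemma cot_injOn : Set.InjOn Real.cot (Set.Ioo 0 π) := by
  have hs : ∀ θ ∈ Set.Ioo (0:ℝ) π, Real.sin θ ≠ 0 := fun θ hθ =>
    (Real.sin_pos_of_pos_of_lt_pi hθ.1 hθ.2).ne'
  have hanti : StrictAntiOn Real.cot (Set.Ioo 0 π) := by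
    apply strictAntiOn_of_deriv_neg (convex_Ioo 0 π)
    · exact fun θ hθ => ((cot_hasDerivAt (hs θ hθ)).continuousAt).continuousWithinAt
    · intro θ hθ
      rw [interior_Ioo] at hθ
      rw [(cot_hasDerivAt (hs θ hθ)).deriv]
      have : (0:ℝ) < Real.sin θ^2 := pow_pos (Real.sin_pos_of_pos_of_lt_pi hθ.1 hθ.2) 2
      exact div_neg_of_neg_of_pos (by norm_num) this
  exact hanti.injOn

lemma cot_image : Real.cot '' (Set.Ioo 0 π) = Set.univ := by
  apply Set.eq_univ_of_forall
  intro x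
  refine ⟨π/2 - Real.arctan x, ⟨by linarith [Real.arctan_lt_pi_div_two x], by
    linarith [Real.neg_pi_div_two_lt_arctan x, Real.pi_pos]⟩, ?_⟩
  rw [Real.cot_eq_cos_div_sin, Real.cos_pi_div_two_sub, Real.sin_pi_div_two_sub,
    ← Real.tan_eq_sin_div_cos, Real.tan_arctan]

lemma cot_sq_add_one {θ : ℝ} (hs : 0 < Real.sin θ) :
    Real.cot θ^2 + 1 = 1/Real.sin θ^2 := by
  rw [Real.cot_eq_cos_div_sin]
  field_simp
  exact Real.cos_sq_add_sin_sq θ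

lemma point_eq (n : ℕ) (r : Polynomial ℝ) (hdeg : r.natDegree < 2*n) {θ : ℝ}
    (hθ : θ ∈ Set.Ioo 0 π) :
    r.eval (Real.cot θ) / ((Real.cot θ)^2+1)^n
      = ∑ m ∈ Finset.range (2*n),
          r.coeff m * (Real.cos θ)^m * (Real.sin θ)^(2*n-m) := by
  have hs : 0 < Real.sin θ := Real.sin_pos_of_pos_of_lt_pi hθ.1 hθ.2
  rw [Polynomial.eval_eq_sum_range' hdeg, cot_sq_add_one hs]
  rw [show ((1:ℝ)/Real.sin θ^2)^n = 1/Real.sin θ^(2*n) by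
    rw [div_pow, one_pow, ← pow_mul]]
  rw [div_eq_mul_inv, one_div, inv_inv, Finset.sum_mul]
  refine Finset.sum_congr rfl fun m hm => ?_
  rw [Finset.mem_range] at hm
  have hpow : Real.sin θ^(2*n) = Real.sin θ^m * Real.sin θ^(2*n-m) := by
    rw [← pow_add]; congr 1; omega
  rw [Real.cot_eq_cos_div_sin, div_pow, hpow]
  field_simp

theorem stmt10 (n : ℕ) (hn : 1 ≤ n) (r : Polynomial ℝ)
    (hr : r.degree ≤ (2*n - 1 : ℕ)) :
    (1/Real.pi) * ∫ x : ℝ, r.eval x / (x^2+1)^(n+1)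
      = (1/((n:ℝ)+1)) * ∑ k ∈ Finset.Icc 1 n,
          r.eval (Real.cot (k * Real.pi / (n+1)))
            / ((Real.cot (k * Real.pi / (n+1)))^2 + 1)^n := by
  have hdeg : r.natDegree < 2*n := by
    have h1 : r.natDegree ≤ 2*n - 1 := Polynomial.natDegree_le_iff_degree_le.mpr hr
    omega
  have hsne : ∀ θ ∈ Set.Ioo (0:ℝ) π, 0 < Real.sin θ := fun θ hθ =>
    Real.sin_pos_of_pos_of_lt_pi hθ.1 hθ.2
  -- substitution x = cot θ
  have hsub : (∫ x : ℝ, r.eval x / (x^2+1)^(n+1))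
      = ∫ θ in Set.Ioo 0 π, |(-1)/Real.sin θ^2| •
          (r.eval (Real.cot θ) / ((Real.cot θ)^2+1)^(n+1)) := by
    rw [← MeasureTheory.setIntegral_univ, ← cot_image,
      integral_image_eq_integral_abs_deriv_smul measurableSet_Ioo
        (fun θ hθ => (cot_hasDerivAt (hsne θ hθ).ne').hasDerivWithinAt) cot_injOn]
  -- pointwise identification with trig polynomial
  have key : ∀ θ ∈ Set.Ioo (0:ℝ) π,
      |(-1)/Real.sin θ^2| • (r.eval (Real.cot θ) / ((Real.cot θ)^2+1)^(n+1))
        = ∑ m ∈ Finset.range (2*n),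
            r.coeff m * (Real.cos θ)^m * (Real.sin θ)^(2*n-m) := by
    intro θ hθ
    have hs := hsne θ hθ
    have habs : |(-1)/Real.sin θ^2| = Real.cot θ^2 + 1 := by
      rw [cot_sq_add_one hs, abs_div, abs_neg, abs_one, abs_of_pos (pow_pos hs 2)]
    have hpos : (0:ℝ) < Real.cot θ^2 + 1 := by positivity
    have hc : Real.cot θ^2 + 1 ≠ 0 := hpos.ne'
    have hcn : (Real.cot θ^2 + 1)^n ≠ 0 := pow_ne_zero _ hc
    rw [smul_eq_mul, habs, ← point_eq n r hdeg hθ, pow_succ (Real.cot θ^2+1) n, ← div_div,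
      mul_comm, div_mul_cancel₀ _ hc]
  rw [hsub, MeasureTheory.setIntegral_congr_fun measurableSet_Ioo key,
    ← MeasureTheory.integral_Ioc_eq_integral_Ioo,
    ← intervalIntegral.integral_of_le Real.pi_pos.le]
  rw [intervalIntegral.integral_finset_sum (μ := volume) (a := (0:ℝ)) (b := π)
    (f := fun m θ => r.coeff m * (Real.cos θ)^m * (Real.sin θ)^(2*n-m))
    (fun m _ => by apply Continuous.intervalIntegrable; fun_prop)]
  -- evaluate each integral by trig_quad
  have hn1 : ((n:ℝ)+1) ≠ 0 := by positivity
  have hπ : Real.pi ≠ 0 := Real.pi_ne_zero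
  have hint : ∀ m ∈ Finset.range (2*n),
      (∫ θ in (0:ℝ)..π, r.coeff m * (Real.cos θ)^m * (Real.sin θ)^(2*n-m))
        = r.coeff m * ((π/((n:ℝ)+1)) * ∑ k ∈ Finset.range (n+1),
            (Real.cos ((k:ℝ)*π/((n:ℝ)+1)))^m * (Real.sin ((k:ℝ)*π/((n:ℝ)+1)))^(2*n-m)) := by
    intro m hm
    rw [Finset.mem_range] at hm
    simp_rw [mul_assoc]
    rw [intervalIntegral.integral_const_mul]
    congr 1
    have := trig_quad n m (by omega)
    rw [div_mul_eq_mul_div, eq_div_iff hn1]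
    linarith [this]
  rw [Finset.sum_congr rfl hint]
  -- now handle RHS
  have hrhs : ∀ k ∈ Finset.Icc 1 n,
      r.eval (Real.cot ((k:ℝ) * π / ((n:ℝ)+1)))
          / ((Real.cot ((k:ℝ) * π / ((n:ℝ)+1)))^2 + 1)^n
        = ∑ m ∈ Finset.range (2*n),
            r.coeff m * (Real.cos ((k:ℝ)*π/((n:ℝ)+1)))^m
              * (Real.sin ((k:ℝ)*π/((n:ℝ)+1)))^(2*n-m) := by
    intro k hk
    rw [Finset.mem_Icc] at hk
    apply point_eq n r hdeg
    constructor
    · have : (0:ℝ) < (k:ℝ) := by exact_mod_cast hk.1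
      positivity
    · rw [div_lt_iff₀ (by positivity)]
      have : (k:ℝ) < (n:ℝ)+1 := by exact_mod_cast Nat.lt_succ_of_le hk.2
      nlinarith [Real.pi_pos]
  rw [Finset.sum_congr rfl hrhs]
  -- extend Icc 1 n to range (n+1)
  have hins : Finset.range (n+1) = insert 0 (Finset.Icc 1 n) := by
    ext x; simp [Finset.mem_range, Finset.mem_Icc]; omega
  have hzero : ∑ m ∈ Finset.range (2*n),
      r.coeff m * (Real.cos ((0:ℕ):ℝ)*π/((n:ℝ)+1))^m * 0 = 0 := by simp
  have hext : ∑ k ∈ Finset.Icc 1 n, ∑ m ∈ Finset.range (2*n),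
        r.coeff m * (Real.cos ((k:ℝ)*π/((n:ℝ)+1)))^m * (Real.sin ((k:ℝ)*π/((n:ℝ)+1)))^(2*n-m)
      = ∑ k ∈ Finset.range (n+1), ∑ m ∈ Finset.range (2*n),
        r.coeff m * (Real.cos ((k:ℝ)*π/((n:ℝ)+1)))^m * (Real.sin ((k:ℝ)*π/((n:ℝ)+1)))^(2*n-m) := by
    rw [hins, Finset.sum_insert (by simp)]
    have : ∑ m ∈ Finset.range (2*n),
        r.coeff m * (Real.cos (((0:ℕ):ℝ)*π/((n:ℝ)+1)))^m * (Real.sin (((0:ℕ):ℝ)*π/((n:ℝ)+1)))^(2*n-m) = 0 := by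
      apply Finset.sum_eq_zero
      intro m hm
      rw [Finset.mem_range] at hm
      simp [Real.sin_zero, zero_pow (show 2*n-m ≠ 0 by omega)]
    rw [this, zero_add]
  rw [hext, Finset.sum_comm]
  rw [Finset.mul_sum, Finset.mul_sum]
  refine Finset.sum_congr rfl fun m hm => ?_
  simp_rw [mul_assoc]
  rw [← Finset.mul_sum]
  field_simp
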